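/- Under the stated assumptions, for any measurable selection (ℓ̃, h̃) of a minimizer over 𝔥_b² of (ℓ, h) ↦ ∫_{I₀} |b̃_{ℓ,h}(x) − b̂(x)| dx, one has ∫_{I₀} E(|b̃_{ℓ̃,h̃}(x) − b(x)|) dx ≤ min_{(ℓ,h)∈𝔥_b²} { ∫_{I₀} E(|b̃_{ℓ,h}(x) − b(x)|) dx } + 2 (r₀ − l₀)^{1/2} R(b̂)^{1/2}. -/

import Mathlib

open MeasureTheory

/-- The rescaled kernel `K_η(x) = η⁻¹ K(x/η)`. -/
noncomputable def Kh (K : ℝ → ℝ) (η x : ℝ) : ℝ := η⁻¹ * K (x / η)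

/-- The estimator `𝔟̂_h⁻¹(w) = l₀ - 2ε + ∫_{I_{2ε}} ∫_{-∞}^{-w} K_h(-g(z) - y) dy dz`
of the inverse of `b`, computed from an estimation `g` of `b`. -/
noncomputable def binvEst (K : ℝ → ℝ) (l₀ r₀ ε h : ℝ) (g : ℝ → ℝ) (w : ℝ) : ℝ :=
  (l₀ - 2 * ε) +
    ∫ z in Set.Icc (l₀ - 2 * ε) (r₀ + 2 * ε), ∫ y in Set.Iic (-w), Kh K h (-(g z) - y)

/-- The strictly decreasing estimator
`lo + ∫_{lo}^{hi} ∫_{-∞}^{-x} K_ℓ(-𝔟̂_h⁻¹(z) - y) dy dz`. -/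
noncomputable def monoEst (K : ℝ → ℝ) (l₀ r₀ ε ℓ h lo hi : ℝ) (g : ℝ → ℝ) (x : ℝ) : ℝ :=
  lo + ∫ z in lo..hi, ∫ y in Set.Iic (-x), Kh K ℓ (-(binvEst K l₀ r₀ ε h g z) - y)

/-- The practical estimator `b̃_{ℓ,h}`, with data-driven endpoints and the indicator of
the event `Ω_{b̂} = {b̂(r_ε) - b̂(l_ε) ≤ -(m_b/2)(r_ε - l_ε)}`. -/
noncomputable def pracEst (K : ℝ → ℝ) (l₀ r₀ ε mb ℓ h : ℝ) (bhat : α → ℝ → ℝ)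
    (x : ℝ) (ω : α) : ℝ :=
  Set.indicator
    {ω' : α | bhat ω' (r₀ + ε) - bhat ω' (l₀ - ε) ≤ -(mb / 2) * ((r₀ + ε) - (l₀ - ε))}
    (fun ω' => monoEst K l₀ r₀ ε ℓ h (bhat ω' (r₀ + ε)) (bhat ω' (l₀ - ε)) (bhat ω') x) ω

section Aux

variable {K : ℝ → ℝ}

/-- Auxiliary: kernel "CDF"-type integral. -/
noncomputable def Phi (K : ℝ → ℝ) (η a w : ℝ) : ℝ := ∫ y in Set.Iic (-w), Kh K η (-a - y)

lemma Phi_def (η a w : ℝ) : Phi K η a w = ∫ y in Set.Iic (-w), Kh K η (-a - y) := rfl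

attribute [irreducible] Phi

lemma Kh_cont (hK2 : ContDiff ℝ 2 K) (η : ℝ) : Continuous (Kh K η) :=
  continuous_const.mul (hK2.continuous.comp (continuous_id.div_const η))

lemma Kh_nonneg (hK0 : ∀ y, 0 ≤ K y) {η : ℝ} (hη : 0 < η) (x : ℝ) : 0 ≤ Kh K η x :=
  mul_nonneg (inv_nonneg.mpr hη.le) (hK0 _)

lemma Kh_integrable (hK2 : ContDiff ℝ 2 K) (hKsupp : ∀ y, 1 < |y| → K y = 0)
    {η : ℝ} (hη : 0 < η) : Integrable (Kh K η) := by
  refine (Kh_cont hK2 η).integrable_of_hasCompactSupport ?_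
  refine HasCompactSupport.intro (isCompact_Icc (a := -η) (b := η)) fun x hx => ?_
  have hx' : 1 < |x / η| := by
    rw [Set.mem_Icc, not_and_or, not_le, not_le] at hx
    rw [abs_div, abs_of_pos hη, lt_div_iff₀ hη, one_mul]
    rcases hx with h | h
    · linarith [neg_le_abs x]
    · linarith [le_abs_self x]
  show η⁻¹ * K (x / η) = 0
  rw [hKsupp _ hx', mul_zero]

lemma Kh_integral (hKint : ∫ y, K y = 1) {η : ℝ} (hη : 0 < η) :
    ∫ x, Kh K η x = 1 := by
  simp only [Kh]
  rw [integral_const_mul, MeasureTheory.Measure.integral_comp_div (g := K) (a := η), smul_eq_mul,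
    abs_of_pos hη, hKint]
  field_simp

lemma Phi_eq (η a w : ℝ) : Phi K η a w = ∫ t in Set.Ici (w - a), Kh K η t := by
  have hcomp : (fun t : ℝ => -a - t) = (fun t : ℝ => t + (-a)) ∘ (fun t : ℝ => -t) := by
    ext t; simp [Function.comp]; ring
  have hmp : MeasurePreserving (fun t : ℝ => -a - t) volume volume := by
    rw [hcomp]
    exact (measurePreserving_add_right volume (-a)).comp
      (MeasureTheory.Measure.measurePreserving_neg volume)
  have hemb : MeasurableEmbedding (fun t : ℝ => -a - t) := by
    rw [hcomp]
    exact (measurableEmbedding_addRight (-a)).comp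
      (Homeomorph.neg ℝ).isClosedEmbedding.measurableEmbedding
  have himg : (fun t : ℝ => -a - t) '' Set.Iic (-w) = Set.Ici (w - a) := by
    ext x
    constructor
    · rintro ⟨t, ht, rfl⟩
      simp only [Set.mem_Iic] at ht
      simp only [Set.mem_Ici]
      linarith
    · intro hx
      simp only [Set.mem_Ici] at hx
      exact ⟨-a - x, by simp only [Set.mem_Iic]; linarith, by ring⟩
  have h2 := hmp.setIntegral_image_emb hemb (Kh K η) (Set.Iic (-w))
  rw [himg] at h2
  rw [Phi_def]
  exact h2.symm

lemma cont_integral_Ici {f : ℝ → ℝ} (hf : Integrable f) :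
    Continuous fun s => ∫ t in Set.Ici s, f t := by
  have h1 : ∀ s : ℝ, ∫ t in Set.Ici s, f t
      = (∫ t, f t) - ((∫ t in Set.Iic (0:ℝ), f t) + ∫ t in (0:ℝ)..s, f t) := by
    intro s
    have hIic : (∫ t in Set.Iic s, f t) - ∫ t in Set.Iic (0:ℝ), f t = ∫ t in (0:ℝ)..s, f t :=
      intervalIntegral.integral_Iic_sub_Iic hf.integrableOn hf.integrableOn
    have hsplit : (∫ t in Set.Iio s, f t) + ∫ t in Set.Ici s, f t = ∫ t, f t :=
      intervalIntegral.integral_Iio_add_Ici hf.integrableOn hf.integrableOn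
    have hIio : ∫ t in Set.Iio s, f t = ∫ t in Set.Iic s, f t :=
      (integral_Iic_eq_integral_Iio).symm
    linarith
  have h2 : (fun s => ∫ t in Set.Ici s, f t)
      = fun s => (∫ t, f t) - ((∫ t in Set.Iic (0:ℝ), f t) + ∫ t in (0:ℝ)..s, f t) :=
    funext h1
  rw [h2]
  exact continuous_const.sub (continuous_const.add (hf.continuous_primitive 0))

lemma Phi_cont (hK2 : ContDiff ℝ 2 K) (hKsupp : ∀ y, 1 < |y| → K y = 0)
    {η : ℝ} (hη : 0 < η) : Continuous fun p : ℝ × ℝ => Phi K η p.1 p.2 := by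
  have h : (fun p : ℝ × ℝ => Phi K η p.1 p.2)
      = (fun s => ∫ t in Set.Ici s, Kh K η t) ∘ (fun p : ℝ × ℝ => p.2 - p.1) := by
    ext p; simp [Phi_eq]
  rw [h]
  exact (cont_integral_Ici (Kh_integrable hK2 hKsupp hη)).comp
    (continuous_snd.sub continuous_fst)

lemma Phi_nonneg (hK0 : ∀ y, 0 ≤ K y) {η : ℝ} (hη : 0 < η) (a w : ℝ) : 0 ≤ Phi K η a w := by
  rw [Phi_def]
  exact setIntegral_nonneg measurableSet_Iic fun y _ => Kh_nonneg hK0 hη _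

lemma Phi_le_one (hK0 : ∀ y, 0 ≤ K y) (hK2 : ContDiff ℝ 2 K)
    (hKsupp : ∀ y, 1 < |y| → K y = 0) (hKint : ∫ y, K y = 1)
    {η : ℝ} (hη : 0 < η) (a w : ℝ) : Phi K η a w ≤ 1 := by
  rw [Phi_eq]
  calc ∫ t in Set.Ici (w - a), Kh K η t ≤ ∫ t, Kh K η t :=
        setIntegral_le_integral (Kh_integrable hK2 hKsupp hη)
          (Filter.Eventually.of_forall fun x => Kh_nonneg hK0 hη x)
    _ = 1 := Kh_integral hKint hη

end Aux

section Aux2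

variable {K : ℝ → ℝ}

lemma binvEst_def (l₀ r₀ ε h : ℝ) (g : ℝ → ℝ) (w : ℝ) :
    binvEst K l₀ r₀ ε h g w
      = (l₀ - 2 * ε) + ∫ z in Set.Icc (l₀ - 2 * ε) (r₀ + 2 * ε), Phi K h (g z) w := by
  unfold binvEst
  simp only [Phi_def]

attribute [irreducible] binvEst

lemma monoEst_eq (l₀ r₀ ε ℓ h lo hi : ℝ) (g : ℝ → ℝ) (x : ℝ) :
    monoEst K l₀ r₀ ε ℓ h lo hi g x
      = lo + ∫ z in lo..hi, Phi K ℓ (binvEst K l₀ r₀ ε h g z) x := by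
  simp only [monoEst, Phi_def]

attribute [irreducible] monoEst

lemma pracEst_def {α : Type} (l₀ r₀ ε mb ℓ h : ℝ) (bhat : α → ℝ → ℝ) (x : ℝ) (ω : α) :
    pracEst K l₀ r₀ ε mb ℓ h bhat x ω
      = Set.indicator
          {ω' : α | bhat ω' (r₀ + ε) - bhat ω' (l₀ - ε) ≤ -(mb / 2) * ((r₀ + ε) - (l₀ - ε))}
          (fun ω' => monoEst K l₀ r₀ ε ℓ h (bhat ω' (r₀ + ε)) (bhat ω' (l₀ - ε)) (bhat ω') x)
          ω := rfl

attribute [irreducible] pracEst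

lemma monoEst_abs_le (hK0 : ∀ y, 0 ≤ K y) (hK2 : ContDiff ℝ 2 K)
    (hKsupp : ∀ y, 1 < |y| → K y = 0) (hKint : ∫ y, K y = 1)
    {ℓ : ℝ} (hℓ : 0 < ℓ) (l₀ r₀ ε h lo hi : ℝ) (g : ℝ → ℝ) (x : ℝ) :
    |monoEst K l₀ r₀ ε ℓ h lo hi g x| ≤ |lo| + |hi - lo| := by
  rw [monoEst_eq]
  have hb : ∀ z ∈ Set.uIoc lo hi, ‖Phi K ℓ (binvEst K l₀ r₀ ε h g z) x‖ ≤ 1 := by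
    intro z _
    rw [Real.norm_eq_abs, abs_of_nonneg (Phi_nonneg hK0 hℓ _ _)]
    exact Phi_le_one hK0 hK2 hKsupp hKint hℓ _ _
  have h2 := intervalIntegral.norm_integral_le_of_norm_le_const hb
  calc |lo + ∫ z in lo..hi, Phi K ℓ (binvEst K l₀ r₀ ε h g z) x|
      ≤ |lo| + ‖∫ z in lo..hi, Phi K ℓ (binvEst K l₀ r₀ ε h g z) x‖ := abs_add_le _ _
    _ ≤ |lo| + 1 * |hi - lo| := by exact add_le_add_right h2 _
    _ = |lo| + |hi - lo| := by rw [one_mul]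

lemma pracEst_abs_le (hK0 : ∀ y, 0 ≤ K y) (hK2 : ContDiff ℝ 2 K)
    (hKsupp : ∀ y, 1 < |y| → K y = 0) (hKint : ∫ y, K y = 1)
    {ℓ : ℝ} (hℓ : 0 < ℓ) (l₀ r₀ ε mb h : ℝ) {Ω : Type} (bhat : Ω → ℝ → ℝ) (x : ℝ) (ω : Ω) :
    |pracEst K l₀ r₀ ε mb ℓ h bhat x ω|
      ≤ |bhat ω (r₀ + ε)| + |bhat ω (l₀ - ε) - bhat ω (r₀ + ε)| := by
  rw [pracEst_def, Set.indicator_apply]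
  split_ifs
  · exact monoEst_abs_le hK0 hK2 hKsupp hKint hℓ _ _ _ _ _ _ _ _
  · simp only [abs_zero]
    positivity

lemma measurable_binvEst (hK2 : ContDiff ℝ 2 K) (hKsupp : ∀ y, 1 < |y| → K y = 0)
    {h : ℝ} (hh : 0 < h) (l₀ r₀ ε : ℝ) {Ω : Type} [MeasurableSpace Ω] {bhat : Ω → ℝ → ℝ}
    (hbhat : Measurable (Function.uncurry bhat)) :
    Measurable fun p : Ω × ℝ => binvEst K l₀ r₀ ε h (bhat p.1) p.2 := by
  have hphi := Phi_cont hK2 hKsupp hh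
  have hg : Measurable fun q : (Ω × ℝ) × ℝ => ((bhat q.1.1 q.2, q.1.2) : ℝ × ℝ) :=
    ((hbhat.comp ((measurable_fst.comp measurable_fst).prodMk measurable_snd)).prodMk
      (measurable_snd.comp measurable_fst))
  have hmeas : Measurable fun q : (Ω × ℝ) × ℝ => Phi K h (bhat q.1.1 q.2) q.1.2 :=
    hphi.measurable.comp hg
  have h2 := (hmeas.stronglyMeasurable.integral_prod_right'
    (ν := volume.restrict (Set.Icc (l₀ - 2 * ε) (r₀ + 2 * ε)))).measurable
  simp only [binvEst_def]
  exact measurable_const.add h2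

lemma measurable_pracEst (hK2 : ContDiff ℝ 2 K) (hKsupp : ∀ y, 1 < |y| → K y = 0)
    {ℓ h : ℝ} (hℓ : 0 < ℓ) (hh : 0 < h) (l₀ r₀ ε mb : ℝ)
    {Ω : Type} [MeasurableSpace Ω] {bhat : Ω → ℝ → ℝ}
    (hbhat : Measurable (Function.uncurry bhat)) :
    Measurable fun p : ℝ × Ω => pracEst K l₀ r₀ ε mb ℓ h bhat p.1 p.2 := by
  have hlom : Measurable fun p : ℝ × Ω => bhat p.2 (r₀ + ε) :=
    hbhat.comp (measurable_snd.prodMk measurable_const)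
  have him : Measurable fun p : ℝ × Ω => bhat p.2 (l₀ - ε) :=
    hbhat.comp (measurable_snd.prodMk measurable_const)
  have hbe : Measurable fun q : (ℝ × Ω) × ℝ => binvEst K l₀ r₀ ε h (bhat q.1.2) q.2 :=
    (measurable_binvEst hK2 hKsupp hh l₀ r₀ ε hbhat).comp
      ((measurable_snd.comp measurable_fst).prodMk measurable_snd)
  have hg2 : Measurable fun q : (ℝ × Ω) × ℝ =>
      ((binvEst K l₀ r₀ ε h (bhat q.1.2) q.2, q.1.1) : ℝ × ℝ) :=
    hbe.prodMk (measurable_fst.comp measurable_fst)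
  have hΨ : Measurable fun q : (ℝ × Ω) × ℝ =>
      Phi K ℓ (binvEst K l₀ r₀ ε h (bhat q.1.2) q.2) q.1.1 :=
    (Phi_cont hK2 hKsupp hℓ).measurable.comp hg2
  have key : ∀ a bb : ℝ × Ω → ℝ, Measurable a → Measurable bb →
      Measurable fun p : ℝ × Ω => ∫ z in Set.Ioc (a p) (bb p),
        Phi K ℓ (binvEst K l₀ r₀ ε h (bhat p.2) z) p.1 := by
    intro a bb ha hb
    have hset : MeasurableSet {q : (ℝ × Ω) × ℝ | a q.1 < q.2 ∧ q.2 ≤ bb q.1} :=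
      (measurableSet_lt (ha.comp measurable_fst) measurable_snd).inter
        (measurableSet_le measurable_snd (hb.comp measurable_fst))
    have hind : Measurable fun q : (ℝ × Ω) × ℝ =>
        if a q.1 < q.2 ∧ q.2 ≤ bb q.1
        then Phi K ℓ (binvEst K l₀ r₀ ε h (bhat q.1.2) q.2) q.1.1 else 0 :=
      Measurable.ite hset hΨ measurable_const
    have h2 := (hind.stronglyMeasurable.integral_prod_right'
      (ν := (volume : Measure ℝ))).measurable
    have h3 : (fun p : ℝ × Ω => ∫ z in Set.Ioc (a p) (bb p),
        Phi K ℓ (binvEst K l₀ r₀ ε h (bhat p.2) z) p.1)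
        = fun p : ℝ × Ω => ∫ z : ℝ, (if a p < z ∧ z ≤ bb p
            then Phi K ℓ (binvEst K l₀ r₀ ε h (bhat p.2) z) p.1 else 0) := by
      funext p
      rw [← integral_indicator measurableSet_Ioc]
      congr 1
      funext z
      rw [Set.indicator_apply]
      simp [Set.mem_Ioc]
    rw [h3]
    exact h2
  have hmono : Measurable fun p : ℝ × Ω =>
      monoEst K l₀ r₀ ε ℓ h (bhat p.2 (r₀ + ε)) (bhat p.2 (l₀ - ε)) (bhat p.2) p.1 := by
    have e : (fun p : ℝ × Ω =>
        monoEst K l₀ r₀ ε ℓ h (bhat p.2 (r₀ + ε)) (bhat p.2 (l₀ - ε)) (bhat p.2) p.1)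
        = fun p => bhat p.2 (r₀ + ε)
          + ((∫ z in Set.Ioc (bhat p.2 (r₀ + ε)) (bhat p.2 (l₀ - ε)),
              Phi K ℓ (binvEst K l₀ r₀ ε h (bhat p.2) z) p.1)
           - ∫ z in Set.Ioc (bhat p.2 (l₀ - ε)) (bhat p.2 (r₀ + ε)),
              Phi K ℓ (binvEst K l₀ r₀ ε h (bhat p.2) z) p.1) := by
      funext p
      rw [monoEst_eq]
      rfl
    rw [e]
    exact hlom.add ((key _ _ hlom him).sub (key _ _ him hlom))
  have hev : MeasurableSet {p : ℝ × Ω |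
      bhat p.2 (r₀ + ε) - bhat p.2 (l₀ - ε) ≤ -(mb / 2) * ((r₀ + ε) - (l₀ - ε))} :=
    measurableSet_le (hlom.sub him) measurable_const
  have e2 : (fun p : ℝ × Ω => pracEst K l₀ r₀ ε mb ℓ h bhat p.1 p.2)
      = fun p : ℝ × Ω => if bhat p.2 (r₀ + ε) - bhat p.2 (l₀ - ε)
            ≤ -(mb / 2) * ((r₀ + ε) - (l₀ - ε))
        then monoEst K l₀ r₀ ε ℓ h (bhat p.2 (r₀ + ε)) (bhat p.2 (l₀ - ε)) (bhat p.2) p.1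
        else 0 := by
    funext p
    rw [pracEst_def, Set.indicator_apply]
    rfl
  rw [e2]
  exact Measurable.ite hev hmono measurable_const

end Aux2

/-- Remark 2.7.(2): `L¹`-risk bound for the adaptive practical estimator `b̃_{ℓ̃,h̃}`. -/
theorem stmt4 (l₀ r₀ ε mb : ℝ) (K b b' binv : ℝ → ℝ)
    (hlr : l₀ < r₀) (hε : 0 < ε) (hε1 : ε ≤ 1) (hmb : 0 < mb)
    -- kernel assumptions
    (hK0 : ∀ y, 0 ≤ K y) (hK2 : ContDiff ℝ 2 K) (hKsymm : ∀ y, K (-y) = K y)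
    (hKsupp : ∀ y, 1 < |y| → K y = 0) (hKint : ∫ y, K y = 1)
    -- `b` is continuously differentiable on `I_{2ε}` with `b' ≤ -mb` there
    (hbd : ∀ x ∈ Set.Icc (l₀ - 2 * ε) (r₀ + 2 * ε), HasDerivAt b (b' x) x)
    (hb'c : ContinuousOn b' (Set.Icc (l₀ - 2 * ε) (r₀ + 2 * ε)))
    (hb'le : ∀ x ∈ Set.Icc (l₀ - 2 * ε) (r₀ + 2 * ε), b' x ≤ -mb)
    -- `binv` is the inverse of `b` on `I_{2ε}`
    (hbinv : ∀ x ∈ Set.Icc (l₀ - 2 * ε) (r₀ + 2 * ε), binv (b x) = x)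
    -- the probability space and the estimator `b̂`
    (Ω : Type) [MeasurableSpace Ω] (P : Measure Ω) [IsProbabilityMeasure P]
    (bhat : Ω → ℝ → ℝ) (hbhat : Measurable (Function.uncurry bhat))
    (hsq : ∀ x ∈ Set.Icc (l₀ - 2 * ε) (r₀ + 2 * ε),
      Integrable (fun ω => |bhat ω x - b x| ^ 2) P)
    (hRint : IntegrableOn (fun x => ∫ ω, |bhat ω x - b x| ^ 2 ∂P)
      (Set.Icc (l₀ - 2 * ε) (r₀ + 2 * ε)))
    -- the bandwidths set `𝔥_b`, a nonempty finite subset of `(0, min{1, m_b} ε)`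
    (𝔥 : Finset ℝ) (h𝔥ne : 𝔥.Nonempty) (h𝔥 : ∀ u ∈ 𝔥, u ∈ Set.Ioo 0 (min 1 mb * ε))
    -- a measurable selection `(ℓ̃, h̃)` of a minimizer of the bandwidths selection criterion
    (ltil htil : Ω → ℝ)
    (hlmeas : Measurable ltil) (hhmeas : Measurable htil)
    (hmem : ∀ ω, ltil ω ∈ 𝔥 ∧ htil ω ∈ 𝔥)
    (hargmin : ∀ ω, ∀ ℓ ∈ 𝔥, ∀ h ∈ 𝔥,
      (∫ x in Set.Icc l₀ r₀,
        |pracEst K l₀ r₀ ε mb (ltil ω) (htil ω) bhat x ω - bhat ω x|) ≤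
      ∫ x in Set.Icc l₀ r₀, |pracEst K l₀ r₀ ε mb ℓ h bhat x ω - bhat ω x|) :
    (∫ x in Set.Icc l₀ r₀, ∫ ω,
        |pracEst K l₀ r₀ ε mb (ltil ω) (htil ω) bhat x ω - b x| ∂P) ≤
      (𝔥 ×ˢ 𝔥).inf' (h𝔥ne.product h𝔥ne) (fun p =>
        ∫ x in Set.Icc l₀ r₀, ∫ ω, |pracEst K l₀ r₀ ε mb p.1 p.2 bhat x ω - b x| ∂P) +
      2 * Real.sqrt (r₀ - l₀) *
        Real.sqrt (∫ x in Set.Icc (l₀ - 2 * ε) (r₀ + 2 * ε),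
          ∫ ω, |bhat ω x - b x| ^ 2 ∂P) := by
  -- basic set facts
  have hsub : Set.Icc l₀ r₀ ⊆ Set.Icc (l₀ - 2 * ε) (r₀ + 2 * ε) :=
    Set.Icc_subset_Icc (by linarith) (by linarith)
  have hrε : (r₀ + ε) ∈ Set.Icc (l₀ - 2 * ε) (r₀ + 2 * ε) := by
    constructor <;> simp <;> linarith
  have hlε : (l₀ - ε) ∈ Set.Icc (l₀ - 2 * ε) (r₀ + 2 * ε) := by
    constructor <;> simp <;> linarith
  have hpos : ∀ u ∈ 𝔥, (0:ℝ) < u := fun u hu => (h𝔥 u hu).1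
  haveI : IsFiniteMeasure (volume.restrict (Set.Icc l₀ r₀)) :=
    ⟨by rw [Measure.restrict_apply_univ]; exact measure_Icc_lt_top⟩
  -- continuity/measurability of b on I₀
  have hb_cont : ContinuousOn b (Set.Icc l₀ r₀) := fun x hx =>
    (hbd x (hsub hx)).continuousAt.continuousWithinAt
  have hbmeas : AEStronglyMeasurable b (volume.restrict (Set.Icc l₀ r₀)) :=
    hb_cont.aestronglyMeasurable measurableSet_Icc
  have hbP : AEStronglyMeasurable (fun q : ℝ × Ω => b q.1)
      ((volume.restrict (Set.Icc l₀ r₀)).prod P) := hbmeas.comp_fst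
  have hbhat2 : Measurable fun q : ℝ × Ω => bhat q.2 q.1 :=
    hbhat.comp (measurable_snd.prodMk measurable_fst)
  have hbsec : ∀ x : ℝ, Measurable fun ω => bhat ω x := fun x =>
    hbhat.comp (measurable_id.prodMk measurable_const)
  -- integrability of sections of b̂
  have hsq_abs : ∀ x ∈ Set.Icc (l₀ - 2 * ε) (r₀ + 2 * ε),
      Integrable (fun ω => |bhat ω x - b x|) P := by
    intro x hx
    refine ((integrable_const (1:ℝ)).add (hsq x hx)).mono'
      (((hbsec x).sub_const (b x)).abs.aestronglyMeasurable) (Filter.Eventually.of_forall fun ω => ?_)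
    rw [Real.norm_eq_abs, abs_abs]
    simp only [Pi.add_apply]
    nlinarith [sq_nonneg (|bhat ω x - b x| - 1), abs_nonneg (bhat ω x - b x)]
  have hbx_int : ∀ x ∈ Set.Icc (l₀ - 2 * ε) (r₀ + 2 * ε),
      Integrable (fun ω => bhat ω x) P := by
    intro x hx
    refine ((hsq_abs x hx).add (integrable_const |b x|)).mono'
      (hbsec x).aestronglyMeasurable (Filter.Eventually.of_forall fun ω => ?_)
    rw [Real.norm_eq_abs]
    simp only [Pi.add_apply]
    calc |bhat ω x| = |(bhat ω x - b x) + b x| := by congr 1; ring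
      _ ≤ |bhat ω x - b x| + |b x| := abs_add_le _ _
  -- the dominating function M
  have hM_meas : Measurable fun ω => |bhat ω (r₀ + ε)| + |bhat ω (l₀ - ε) - bhat ω (r₀ + ε)| :=
    (hbsec _).abs.add ((hbsec _).sub (hbsec _)).abs
  have hM_int : Integrable (fun ω =>
      |bhat ω (r₀ + ε)| + |bhat ω (l₀ - ε) - bhat ω (r₀ + ε)|) P :=
    (hbx_int _ hrε).abs.add ((hbx_int _ hlε).sub (hbx_int _ hrε)).abs
  -- measurability of the adaptive estimator
  have hGmeas : ∀ p : ℝ × ℝ, p.1 ∈ 𝔥 → p.2 ∈ 𝔥 →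
      Measurable fun q : ℝ × Ω => pracEst K l₀ r₀ ε mb p.1 p.2 bhat q.1 q.2 := fun p hp1 hp2 =>
    measurable_pracEst hK2 hKsupp (hpos _ hp1) (hpos _ hp2) l₀ r₀ ε mb hbhat
  have hGt_eq : (fun q : ℝ × Ω => pracEst K l₀ r₀ ε mb (ltil q.2) (htil q.2) bhat q.1 q.2)
      = fun q => ∑ p ∈ 𝔥 ×ˢ 𝔥, if ltil q.2 = p.1 ∧ htil q.2 = p.2
          then pracEst K l₀ r₀ ε mb p.1 p.2 bhat q.1 q.2 else 0 := by
    funext q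
    rw [Finset.sum_eq_single_of_mem ((ltil q.2, htil q.2))
      (Finset.mem_product.mpr ⟨(hmem q.2).1, (hmem q.2).2⟩)]
    · simp
    · intro p hp hne
      rw [if_neg]
      intro hcon
      exact hne (Prod.ext_iff.mpr ⟨hcon.1.symm, hcon.2.symm⟩)
  have hGt_meas : Measurable
      (fun q : ℝ × Ω => pracEst K l₀ r₀ ε mb (ltil q.2) (htil q.2) bhat q.1 q.2) := by
    rw [hGt_eq]
    refine Finset.measurable_sum _ fun p hp => ?_
    have hps := Finset.mem_product.mp hp
    refine Measurable.ite ?_ (hGmeas p hps.1 hps.2) measurable_const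
    exact (((hlmeas.comp measurable_snd) (measurableSet_singleton p.1)).inter
      ((hhmeas.comp measurable_snd) (measurableSet_singleton p.2)))
  -- pointwise bounds
  have hGp_bdd : ∀ p : ℝ × ℝ, p.1 ∈ 𝔥 → ∀ q : ℝ × Ω,
      |pracEst K l₀ r₀ ε mb p.1 p.2 bhat q.1 q.2|
        ≤ |bhat q.2 (r₀ + ε)| + |bhat q.2 (l₀ - ε) - bhat q.2 (r₀ + ε)| := fun p hp1 q =>
    pracEst_abs_le hK0 hK2 hKsupp hKint (hpos _ hp1) l₀ r₀ ε mb p.2 bhat q.1 q.2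
  have hGt_bdd : ∀ q : ℝ × Ω,
      |pracEst K l₀ r₀ ε mb (ltil q.2) (htil q.2) bhat q.1 q.2|
        ≤ |bhat q.2 (r₀ + ε)| + |bhat q.2 (l₀ - ε) - bhat q.2 (r₀ + ε)| := fun q =>
    pracEst_abs_le hK0 hK2 hKsupp hKint (hpos _ (hmem q.2).1) l₀ r₀ ε mb _ bhat q.1 q.2
  -- integrability of dominating functions on the product
  have hMπ : Integrable (fun q : ℝ × Ω =>
      |bhat q.2 (r₀ + ε)| + |bhat q.2 (l₀ - ε) - bhat q.2 (r₀ + ε)|)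
      ((volume.restrict (Set.Icc l₀ r₀)).prod P) := by
    refine (integrable_prod_iff (hM_meas.comp measurable_snd).aestronglyMeasurable).2
      ⟨Filter.Eventually.of_forall fun x => hM_int, ?_⟩
    have hc : Integrable (fun _ : ℝ =>
        ∫ ω, ‖|bhat ω (r₀ + ε)| + |bhat ω (l₀ - ε) - bhat ω (r₀ + ε)|‖ ∂P)
        (volume.restrict (Set.Icc l₀ r₀)) := integrable_const _
    exact hc
  have hZaesm : AEStronglyMeasurable (fun q : ℝ × Ω => |bhat q.2 q.1 - b q.1|)
      ((volume.restrict (Set.Icc l₀ r₀)).prod P) :=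
    continuous_abs.comp_aestronglyMeasurable (hbhat2.aestronglyMeasurable.sub hbP)
  have hsqπ : Integrable (fun q : ℝ × Ω => |bhat q.2 q.1 - b q.1| ^ 2)
      ((volume.restrict (Set.Icc l₀ r₀)).prod P) := by
    refine (integrable_prod_iff
      ((continuous_pow 2).comp_aestronglyMeasurable hZaesm)).2 ⟨?_, ?_⟩
    · filter_upwards [ae_restrict_mem measurableSet_Icc] with x hx
      exact hsq x (hsub hx)
    · have he : (fun x => ∫ ω, ‖|bhat ω x - b x| ^ 2‖ ∂P)
          = fun x => ∫ ω, |bhat ω x - b x| ^ 2 ∂P := by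
        funext x
        refine integral_congr_ae (Filter.Eventually.of_forall fun ω => ?_)
        show ‖|bhat ω x - b x| ^ 2‖ = |bhat ω x - b x| ^ 2
        rw [Real.norm_eq_abs, abs_of_nonneg (by positivity)]
      rw [he]
      exact hRint.mono_set hsub
  have habsπ : Integrable (fun q : ℝ × Ω => |bhat q.2 q.1 - b q.1|)
      ((volume.restrict (Set.Icc l₀ r₀)).prod P) := by
    refine ((integrable_const (1:ℝ)).add hsqπ).mono' hZaesm
      (Filter.Eventually.of_forall fun q => ?_)
    rw [Real.norm_eq_abs, abs_abs]
    simp only [Pi.add_apply]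
    nlinarith [sq_nonneg (|bhat q.2 q.1 - b q.1| - 1), abs_nonneg (bhat q.2 q.1 - b q.1)]
  have hbabsπ : Integrable (fun q : ℝ × Ω => |b q.1|)
      ((volume.restrict (Set.Icc l₀ r₀)).prod P) := by
    refine (integrable_prod_iff
      (continuous_abs.comp_aestronglyMeasurable hbP)).2
      ⟨Filter.Eventually.of_forall fun x =>
        (integrable_const (μ := P) |b x| : Integrable (fun _ : Ω => |b x|) P), ?_⟩
    have he : (fun x : ℝ => ∫ _ : Ω, ‖|b x|‖ ∂P) = fun x => |b x| := by
      funext x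
      rw [integral_const, probReal_univ, one_smul, Real.norm_eq_abs, abs_abs]
    rw [he]
    exact (hb_cont.abs.integrableOn_compact isCompact_Icc)
  -- integrability of the four main integrands
  have hf1aesm : AEStronglyMeasurable (fun q : ℝ × Ω =>
      |pracEst K l₀ r₀ ε mb (ltil q.2) (htil q.2) bhat q.1 q.2 - b q.1|)
      ((volume.restrict (Set.Icc l₀ r₀)).prod P) :=
    continuous_abs.comp_aestronglyMeasurable (hGt_meas.aestronglyMeasurable.sub hbP)
  have hf1int : Integrable (fun q : ℝ × Ω =>
      |pracEst K l₀ r₀ ε mb (ltil q.2) (htil q.2) bhat q.1 q.2 - b q.1|)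
      ((volume.restrict (Set.Icc l₀ r₀)).prod P) := by
    refine (hMπ.add hbabsπ).mono' hf1aesm (Filter.Eventually.of_forall fun q => ?_)
    rw [Real.norm_eq_abs, abs_abs]
    simp only [Pi.add_apply]
    have := hGt_bdd q
    have h2 := abs_sub (pracEst K l₀ r₀ ε mb (ltil q.2) (htil q.2) bhat q.1 q.2) (b q.1)
    linarith
  have hf3int : Integrable (fun q : ℝ × Ω =>
      |pracEst K l₀ r₀ ε mb (ltil q.2) (htil q.2) bhat q.1 q.2 - bhat q.2 q.1|)
      ((volume.restrict (Set.Icc l₀ r₀)).prod P) := by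
    refine (hMπ.add (habsπ.add hbabsπ)).mono'
      (continuous_abs.comp_aestronglyMeasurable
        (hGt_meas.aestronglyMeasurable.sub hbhat2.aestronglyMeasurable))
      (Filter.Eventually.of_forall fun q => ?_)
    rw [Real.norm_eq_abs, abs_abs]
    simp only [Pi.add_apply]
    have h1 := hGt_bdd q
    have h2 := abs_sub (pracEst K l₀ r₀ ε mb (ltil q.2) (htil q.2) bhat q.1 q.2) (bhat q.2 q.1)
    have h3 : |bhat q.2 q.1| ≤ |bhat q.2 q.1 - b q.1| + |b q.1| := by
      calc |bhat q.2 q.1| = |(bhat q.2 q.1 - b q.1) + b q.1| := by congr 1; ring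
        _ ≤ |bhat q.2 q.1 - b q.1| + |b q.1| := abs_add_le _ _
    linarith
  have hf2int : ∀ p : ℝ × ℝ, p.1 ∈ 𝔥 → p.2 ∈ 𝔥 → Integrable (fun q : ℝ × Ω =>
      |pracEst K l₀ r₀ ε mb p.1 p.2 bhat q.1 q.2 - b q.1|)
      ((volume.restrict (Set.Icc l₀ r₀)).prod P) := by
    intro p hp1 hp2
    refine (hMπ.add hbabsπ).mono'
      (continuous_abs.comp_aestronglyMeasurable
        ((hGmeas p hp1 hp2).aestronglyMeasurable.sub hbP))
      (Filter.Eventually.of_forall fun q => ?_)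
    rw [Real.norm_eq_abs, abs_abs]
    simp only [Pi.add_apply]
    have h1 := hGp_bdd p hp1 q
    have h2 := abs_sub (pracEst K l₀ r₀ ε mb p.1 p.2 bhat q.1 q.2) (b q.1)
    linarith
  have hf4int : ∀ p : ℝ × ℝ, p.1 ∈ 𝔥 → p.2 ∈ 𝔥 → Integrable (fun q : ℝ × Ω =>
      |pracEst K l₀ r₀ ε mb p.1 p.2 bhat q.1 q.2 - bhat q.2 q.1|)
      ((volume.restrict (Set.Icc l₀ r₀)).prod P) := by
    intro p hp1 hp2
    refine (hMπ.add (habsπ.add hbabsπ)).mono'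
      (continuous_abs.comp_aestronglyMeasurable
        ((hGmeas p hp1 hp2).aestronglyMeasurable.sub hbhat2.aestronglyMeasurable))
      (Filter.Eventually.of_forall fun q => ?_)
    rw [Real.norm_eq_abs, abs_abs]
    simp only [Pi.add_apply]
    have h1 := hGp_bdd p hp1 q
    have h2 := abs_sub (pracEst K l₀ r₀ ε mb p.1 p.2 bhat q.1 q.2) (bhat q.2 q.1)
    have h3 : |bhat q.2 q.1| ≤ |bhat q.2 q.1 - b q.1| + |b q.1| := by
      calc |bhat q.2 q.1| = |(bhat q.2 q.1 - b q.1) + b q.1| := by congr 1; ring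
        _ ≤ |bhat q.2 q.1 - b q.1| + |b q.1| := abs_add_le _ _
    linarith
  -- choose the minimizer p₀
  obtain ⟨p₀, hp₀mem, hp₀eq⟩ := Finset.exists_mem_eq_inf' (h𝔥ne.product h𝔥ne) (fun p =>
    ∫ x in Set.Icc l₀ r₀, ∫ ω, |pracEst K l₀ r₀ ε mb p.1 p.2 bhat x ω - b x| ∂P)
  have hp01 := (Finset.mem_product.mp hp₀mem).1
  have hp02 := (Finset.mem_product.mp hp₀mem).2
  -- Fubini identities
  have hA : (∫ x in Set.Icc l₀ r₀, ∫ ω,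
        |pracEst K l₀ r₀ ε mb (ltil ω) (htil ω) bhat x ω - b x| ∂P)
      = ∫ q, |pracEst K l₀ r₀ ε mb (ltil q.2) (htil q.2) bhat q.1 q.2 - b q.1|
          ∂((volume.restrict (Set.Icc l₀ r₀)).prod P) := (integral_prod _ hf1int).symm
  have hB : (∫ x in Set.Icc l₀ r₀, ∫ ω,
        |pracEst K l₀ r₀ ε mb p₀.1 p₀.2 bhat x ω - b x| ∂P)
      = ∫ q, |pracEst K l₀ r₀ ε mb p₀.1 p₀.2 bhat q.1 q.2 - b q.1|
          ∂((volume.restrict (Set.Icc l₀ r₀)).prod P) :=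
    (integral_prod _ (hf2int p₀ hp01 hp02)).symm
  -- the inequality chain
  have step1 : (∫ q, |pracEst K l₀ r₀ ε mb (ltil q.2) (htil q.2) bhat q.1 q.2 - b q.1|
          ∂((volume.restrict (Set.Icc l₀ r₀)).prod P))
      ≤ (∫ q, |pracEst K l₀ r₀ ε mb (ltil q.2) (htil q.2) bhat q.1 q.2 - bhat q.2 q.1|
          ∂((volume.restrict (Set.Icc l₀ r₀)).prod P))
        + ∫ q, |bhat q.2 q.1 - b q.1| ∂((volume.restrict (Set.Icc l₀ r₀)).prod P) := by
    rw [← integral_add hf3int habsπ]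
    refine integral_mono hf1int (hf3int.add habsπ) fun q => ?_
    simp only [Pi.add_apply]
    exact abs_sub_le _ _ _
  have step2 : (∫ q, |pracEst K l₀ r₀ ε mb (ltil q.2) (htil q.2) bhat q.1 q.2 - bhat q.2 q.1|
          ∂((volume.restrict (Set.Icc l₀ r₀)).prod P))
      ≤ ∫ q, |pracEst K l₀ r₀ ε mb p₀.1 p₀.2 bhat q.1 q.2 - bhat q.2 q.1|
          ∂((volume.restrict (Set.Icc l₀ r₀)).prod P) := by
    rw [integral_prod_symm _ hf3int, integral_prod_symm _ (hf4int p₀ hp01 hp02)]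
    refine integral_mono hf3int.integral_prod_right
      (hf4int p₀ hp01 hp02).integral_prod_right fun ω => ?_
    exact hargmin ω p₀.1 hp01 p₀.2 hp02
  have step3 : (∫ q, |pracEst K l₀ r₀ ε mb p₀.1 p₀.2 bhat q.1 q.2 - bhat q.2 q.1|
          ∂((volume.restrict (Set.Icc l₀ r₀)).prod P))
      ≤ (∫ q, |pracEst K l₀ r₀ ε mb p₀.1 p₀.2 bhat q.1 q.2 - b q.1|
          ∂((volume.restrict (Set.Icc l₀ r₀)).prod P))
        + ∫ q, |bhat q.2 q.1 - b q.1| ∂((volume.restrict (Set.Icc l₀ r₀)).prod P) := by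
    rw [← integral_add (hf2int p₀ hp01 hp02) habsπ]
    refine integral_mono (hf4int p₀ hp01 hp02) ((hf2int p₀ hp01 hp02).add habsπ) fun q => ?_
    simp only [Pi.add_apply]
    calc |pracEst K l₀ r₀ ε mb p₀.1 p₀.2 bhat q.1 q.2 - bhat q.2 q.1|
        ≤ |pracEst K l₀ r₀ ε mb p₀.1 p₀.2 bhat q.1 q.2 - b q.1| + |b q.1 - bhat q.2 q.1| :=
          abs_sub_le _ _ _
      _ = |pracEst K l₀ r₀ ε mb p₀.1 p₀.2 bhat q.1 q.2 - b q.1| + |bhat q.2 q.1 - b q.1| := by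
          rw [abs_sub_comm (b q.1)]
  -- bound on the bias term D
  have hEaesm : AEStronglyMeasurable (fun x => ∫ ω, |bhat ω x - b x| ^ 2 ∂P)
      (volume.restrict (Set.Icc l₀ r₀)) := hsqπ.aestronglyMeasurable.integral_prod_right'
  have hE_nonneg : ∀ x, 0 ≤ ∫ ω, |bhat ω x - b x| ^ 2 ∂P := fun x =>
    integral_nonneg fun ω => by positivity
  have hconj : (2:ℝ).HolderConjugate 2 := Real.HolderConjugate.two_two
  have hofReal : ENNReal.ofReal (2:ℝ) = 2 := by
    rw [ENNReal.ofReal_ofNat]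
  have hrpow2 : ∀ u : ℝ, u ^ (2:ℝ) = u ^ 2 := fun u => by
    rw [show (2:ℝ) = ((2:ℕ):ℝ) by norm_num, Real.rpow_natCast]
  have hCS : ∀ x ∈ Set.Icc (l₀ - 2 * ε) (r₀ + 2 * ε), (∫ ω, |bhat ω x - b x| ∂P)
      ≤ Real.sqrt (∫ ω, |bhat ω x - b x| ^ 2 ∂P) := by
    intro x hx
    have hmem2 : MemLp (fun ω => |bhat ω x - b x|) (ENNReal.ofReal 2) P := by
      rw [hofReal]
      exact (memLp_two_iff_integrable_sq
        (((hbsec x).sub_const (b x)).abs.aestronglyMeasurable)).2 (hsq x hx)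
    have hmem1 : MemLp (fun _ : Ω => (1:ℝ)) (ENNReal.ofReal 2) P := by
      rw [hofReal]; exact memLp_const 1
    have h := integral_mul_le_Lp_mul_Lq_of_nonneg hconj
      (Filter.Eventually.of_forall fun ω => abs_nonneg _)
      (Filter.Eventually.of_forall fun _ => zero_le_one) hmem2 hmem1
    simp only [mul_one, hrpow2, one_pow] at h
    rw [integral_const, probReal_univ, one_smul, Real.one_rpow, mul_one] at h
    rw [Real.sqrt_eq_rpow]
    exact h
  have hg_int : Integrable (fun x => ∫ ω, |bhat ω x - b x| ∂P)
      (volume.restrict (Set.Icc l₀ r₀)) := habsπ.integral_prod_left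
  have hs_aesm : AEStronglyMeasurable (fun x => Real.sqrt (∫ ω, |bhat ω x - b x| ^ 2 ∂P))
      (volume.restrict (Set.Icc l₀ r₀)) :=
    Real.continuous_sqrt.comp_aestronglyMeasurable hEaesm
  have hs_int : Integrable (fun x => Real.sqrt (∫ ω, |bhat ω x - b x| ^ 2 ∂P))
      (volume.restrict (Set.Icc l₀ r₀)) := by
    refine ((integrable_const (1:ℝ)).add (hRint.mono_set hsub)).mono' hs_aesm
      (Filter.Eventually.of_forall fun x => ?_)
    rw [Real.norm_eq_abs, abs_of_nonneg (Real.sqrt_nonneg _)]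
    simp only [Pi.add_apply]
    nlinarith [Real.sq_sqrt (hE_nonneg x), Real.sqrt_nonneg (∫ ω, |bhat ω x - b x| ^ 2 ∂P),
      sq_nonneg (Real.sqrt (∫ ω, |bhat ω x - b x| ^ 2 ∂P) - 1)]
  have hD1 : (∫ q, |bhat q.2 q.1 - b q.1| ∂((volume.restrict (Set.Icc l₀ r₀)).prod P))
      = ∫ x in Set.Icc l₀ r₀, ∫ ω, |bhat ω x - b x| ∂P := integral_prod _ habsπ
  have hD2 : (∫ x in Set.Icc l₀ r₀, ∫ ω, |bhat ω x - b x| ∂P)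
      ≤ ∫ x in Set.Icc l₀ r₀, Real.sqrt (∫ ω, |bhat ω x - b x| ^ 2 ∂P) := by
    refine integral_mono_ae hg_int hs_int ?_
    filter_upwards [ae_restrict_mem measurableSet_Icc] with x hx
    exact hCS x (hsub hx)
  have he2 : (fun x => Real.sqrt (∫ ω, |bhat ω x - b x| ^ 2 ∂P) ^ 2)
      = fun x => ∫ ω, |bhat ω x - b x| ^ 2 ∂P := by
    funext x; rw [Real.sq_sqrt (hE_nonneg x)]
  have hmemS : MemLp (fun x => Real.sqrt (∫ ω, |bhat ω x - b x| ^ 2 ∂P)) (ENNReal.ofReal 2)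
      (volume.restrict (Set.Icc l₀ r₀)) := by
    rw [hofReal]
    refine (memLp_two_iff_integrable_sq hs_aesm).2 ?_
    rw [he2]
    exact hRint.mono_set hsub
  have hmem1' : MemLp (fun _ : ℝ => (1:ℝ)) (ENNReal.ofReal 2)
      (volume.restrict (Set.Icc l₀ r₀)) := by
    rw [hofReal]; exact memLp_const 1
  have hH := integral_mul_le_Lp_mul_Lq_of_nonneg (μ := volume.restrict (Set.Icc l₀ r₀)) hconj
    (Filter.Eventually.of_forall fun x => Real.sqrt_nonneg _)
    (Filter.Eventually.of_forall fun _ => zero_le_one) hmemS hmem1'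
  simp only [mul_one, hrpow2, one_pow] at hH
  rw [integral_const] at hH
  have hvol : (volume.restrict (Set.Icc l₀ r₀)).real Set.univ = r₀ - l₀ := by
    rw [measureReal_def, Measure.restrict_apply_univ, Real.volume_Icc, ENNReal.toReal_ofReal (by linarith)]
  rw [hvol, smul_eq_mul, mul_one, he2] at hH
  rw [← Real.sqrt_eq_rpow, ← Real.sqrt_eq_rpow] at hH
  have hmono_set : (∫ x in Set.Icc l₀ r₀, ∫ ω, |bhat ω x - b x| ^ 2 ∂P)
      ≤ ∫ x in Set.Icc (l₀ - 2 * ε) (r₀ + 2 * ε), ∫ ω, |bhat ω x - b x| ^ 2 ∂P :=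
    setIntegral_mono_set hRint (Filter.Eventually.of_forall fun x => hE_nonneg x)
      (HasSubset.Subset.eventuallyLE hsub)
  have hDle : (∫ q, |bhat q.2 q.1 - b q.1| ∂((volume.restrict (Set.Icc l₀ r₀)).prod P))
      ≤ Real.sqrt (r₀ - l₀) * Real.sqrt (∫ x in Set.Icc (l₀ - 2 * ε) (r₀ + 2 * ε),
          ∫ ω, |bhat ω x - b x| ^ 2 ∂P) := by
    rw [hD1]
    refine hD2.trans (hH.trans ?_)
    rw [mul_comm]
    exact mul_le_mul_of_nonneg_left (Real.sqrt_le_sqrt hmono_set) (Real.sqrt_nonneg _)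
  -- assemble everything
  rw [hA, hp₀eq, hB]
  linarith
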